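/- For every integer n ≥ 1, the central odd-case symmetric binomial probability satisfies (πn)^{-1/2} · exp(−1/n) < a*_{0,n} < (πn)^{-1/2} · exp(2/(3n)). -/

import Mathlib

open Real

/-- `a0star n = C(2n−1, n−1) · 2^(−2n+1)`: the central odd-case symmetric binomial
probability. -/
noncomputable def a0star (n : ℕ) : ℝ :=
  ((2 * n - 1).choose (n - 1) : ℝ) * (2 : ℝ) ^ (-(2 * (n : ℤ)) + 1)

/-- The central binomial probability `C(2n,n)/4^n`. -/
noncomputable def qcb (n : ℕ) : ℝ := (Nat.centralBinom n : ℝ) / 4 ^ n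

lemma qcb_pos (n : ℕ) : 0 < qcb n := by
  unfold qcb
  have := Nat.centralBinom_pos n
  positivity

lemma key (n : ℕ) : ((2 * n + 1 : ℝ)) * Real.Wallis.W n * qcb n ^ 2 = 1 := by
  have hW := Real.Wallis.W_eq_factorial_ratio n
  have hc : ((Nat.centralBinom n : ℝ)) * (n.factorial : ℝ) * (n.factorial : ℝ) = (((2*n).factorial : ℝ)) := by
    have := Nat.choose_mul_factorial_mul_factorial (Nat.le_mul_of_pos_left n two_pos)
    have h2 : 2 * n - n = n := by omega
    rw [h2] at this
    exact_mod_cast this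
  have hfac : (0 : ℝ) < (n.factorial : ℝ) := by exact_mod_cast Nat.factorial_pos n
  have hfac2 : (0 : ℝ) < (((2*n).factorial : ℝ)) := by exact_mod_cast Nat.factorial_pos (2 * n)
  unfold qcb
  rw [hW]
  have h4 : ((2 : ℝ) ^ (4 * n)) = (4 ^ n) ^ 2 := by
    rw [show (4:ℝ) = 2^2 by norm_num, ← pow_mul, ← pow_mul]
    congr 1; ring
  have h4pos : (0 : ℝ) < 4 ^ n := by positivity
  have hsq : ((Nat.centralBinom n : ℝ))^2 * (n.factorial:ℝ)^4 = (((2*n).factorial : ℝ))^2 := by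
    nlinarith [hc]
  field_simp
  rw [h4]
  linear_combination ((4:ℝ)^n)^2 * hsq

lemma a0star_eq (n : ℕ) (hn : 1 ≤ n) : a0star n = qcb n := by
  have hchoose : Nat.centralBinom n = 2 * (2 * n - 1).choose (n - 1) := by
    have h1 : 2 * n = (2 * n - 1) + 1 := by omega
    have h2 : n = (n - 1) + 1 := by omega
    have hsymm : (2 * n - 1).choose n = (2 * n - 1).choose (n - 1) := by
      have h := Nat.choose_symm (show n ≤ 2 * n - 1 by omega)
      rw [show 2 * n - 1 - n = n - 1 by omega] at h
      exact h.symm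
    rw [Nat.centralBinom]
    conv_lhs => rw [h1, h2, Nat.choose_succ_succ]
    rw [Nat.succ_eq_add_one, ← h2, hsymm]
    omega
  unfold a0star qcb
  rw [hchoose]
  push_cast
  rw [show (-(2 * (n : ℤ)) + 1) = (-(2 * (n:ℤ))) + 1 from rfl, zpow_add₀ (by norm_num : (2:ℝ) ≠ 0),
    zpow_neg, zpow_one]
  have : ((2:ℝ) ^ (2 * (n:ℤ))) = 4 ^ n := by
    rw [show (2 * (n:ℤ)) = ((2*n : ℕ) : ℤ) by push_cast; ring, zpow_natCast, pow_mul]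
    norm_num
  rw [this]
  ring

theorem stmt_7 (n : ℕ) (hn : 1 ≤ n) :
    (Real.sqrt (Real.pi * n))⁻¹ * Real.exp (-(1 / (n : ℝ))) < a0star n ∧
    a0star n < (Real.sqrt (Real.pi * n))⁻¹ * Real.exp (2 / (3 * (n : ℝ))) := by
  have hN : (1:ℝ) ≤ (n:ℝ) := by exact_mod_cast hn
  have hN0 : (0:ℝ) < (n:ℝ) := by linarith
  set N := (n:ℝ) with hNdef
  have hπ := Real.pi_pos
  have hπN : 0 < π * N := by positivity
  have hq := qcb_pos n
  have hW := Real.Wallis.W_pos n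
  have hkey := key n
  have hle := Real.Wallis.W_le n
  have hge := Real.Wallis.le_W n
  rw [a0star_eq n hn]
  have hsqrt : 0 < Real.sqrt (π * N) := Real.sqrt_pos.mpr hπN
  have hsqrt_sq : (Real.sqrt (π * N))^2 = π * N := Real.sq_sqrt hπN.le
  constructor
  · -- lower bound
    have hq2 : 2 / (π * (2*N+1)) ≤ qcb n ^ 2 := by
      rw [div_le_iff₀ (by positivity)]
      nlinarith [mul_le_mul_of_nonneg_left hle
        (by positivity : (0:ℝ) ≤ (2*N+1) * qcb n ^ 2)]
    have hexp : Real.exp (-(1/N) + -(1/N)) < N/(N+2) := by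
      have h1 : 1 + 2/N < Real.exp (2/N) := by
        have := Real.add_one_lt_exp (show (2/N) ≠ 0 by positivity)
        linarith
      have he := Real.exp_pos (2/N)
      rw [show -(1/N) + -(1/N) = -(2/N) by ring, Real.exp_neg,
        inv_eq_one_div, div_lt_div_iff₀ he (by linarith : (0:ℝ) < N+2)]
      have h2 : N * (1 + 2/N) = N + 2 := by field_simp
      nlinarith [mul_lt_mul_of_pos_left h1 hN0]
    apply lt_of_pow_lt_pow_left₀ 2 hq.le
    rw [mul_pow, inv_pow, hsqrt_sq, sq (Real.exp _), ← Real.exp_add]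
    calc (π * N)⁻¹ * Real.exp (-(1/N) + -(1/N))
        < (π * N)⁻¹ * (N/(N+2)) := by
          apply mul_lt_mul_of_pos_left hexp (by positivity)
      _ = 1 / (π * (N+2)) := by
          field_simp
      _ < 2 / (π * (2*N+1)) := by
          rw [div_lt_div_iff₀ (by positivity) (by positivity)]
          nlinarith
      _ ≤ qcb n ^ 2 := hq2
  · -- upper bound
    have hge' : (2*N+1) * π ≤ Real.Wallis.W n * ((2*N+2)*2) := by
      rw [div_mul_div_comm, div_le_iff₀ (by positivity)] at hge
      linarith
    have h1 : (2*N+1) * ((2*N+1) * π * qcb n ^ 2) ≤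
        (2*N+1) * (Real.Wallis.W n * ((2*N+2)*2) * qcb n ^ 2) := by
      apply mul_le_mul_of_nonneg_left _ (by positivity)
      exact mul_le_mul_of_nonneg_right hge' (sq_nonneg _)
    have h2 : (2*N+1) * (Real.Wallis.W n * ((2*N+2)*2) * qcb n ^ 2) = 2*(2*N+2) := by
      linear_combination 2*(2*N+2) * hkey
    have hq2a : (2*N+1)^2 * π * qcb n ^ 2 ≤ 2*(2*N+2) := by nlinarith [h1, h2]
    have hmain : π * N * qcb n ^ 2 < 1 := by
      nlinarith [hq2a, mul_pos hπ (pow_pos hq 2), hN0]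
    have h5 : qcb n < (Real.sqrt (π * N))⁻¹ := by
      apply lt_of_pow_lt_pow_left₀ 2 (by positivity)
      rw [inv_pow, hsqrt_sq, inv_eq_one_div, lt_div_iff₀ hπN]
      nlinarith [hmain]
    have h6 : 1 < Real.exp (2/(3*N)) := by
      have := Real.add_one_lt_exp (show (2/(3*N)) ≠ 0 by positivity)
      have : 0 < 2/(3*N) := by positivity
      nlinarith [Real.add_one_lt_exp (show (2/(3*N)) ≠ 0 by positivity)]
    calc qcb n < (Real.sqrt (π * N))⁻¹ * 1 := by rw [mul_one]; exact h5
      _ < (Real.sqrt (π * N))⁻¹ * Real.exp (2/(3*N)) :=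
          mul_lt_mul_of_pos_left h6 (inv_pos.mpr hsqrt)
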